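/- Let (f_t) and (π_t) be sequences of probability measures and (h_t) the sequence defined by h_t = T_t^{(n_t)} h_{t−1} with h_0 = π_0, where each T_t satisfies the contraction d_TV(T_t^{(n_t)} μ, f_t) ≤ ε · d_TV(μ, f_t) for all probability measures μ, for a fixed ε ∈ (0,1). Then d_TV(h_t, f_t) ≤ Σ_{l=1}^{t} ε^{t+1−l} d_TV(f_l, f_{l−1}) (taking f_0 = π_0). In particular, if d_TV(f_l, f_{l−1}) → 0 then d_TV(h_t, f_t) → 0. -/

import Mathlib

open MeasureTheory ProbabilityTheory Filter

/-- Total variation distance between two measures. -/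
noncomputable def dTV {E : Type*} [MeasurableSpace E] (μ ν : Measure E) : ℝ :=
  ⨆ A : {s : Set E // MeasurableSet s}, |(μ A.1).toReal - (ν A.1).toReal|

/-- The sequence `h_t = S_t h_{t-1}` with `h_0 = π₀`, where `S t` represents the kernel
`T_t^{(n_t)}`. -/
noncomputable def chainSeq {E : Type*} [MeasurableSpace E] (π₀ : Measure E)
    (S : ℕ → Kernel E E) : ℕ → Measure E
  | 0 => π₀
  | t + 1 => (chainSeq π₀ S t).bind (S (t + 1))

section lemmas
variable {E : Type*} [MeasurableSpace E]

instance : Nonempty {s : Set E // MeasurableSet s} := ⟨⟨∅, MeasurableSet.empty⟩⟩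

lemma dTV_nonneg (μ ν : Measure E) : 0 ≤ dTV μ ν :=
  Real.iSup_nonneg fun _ => abs_nonneg _

lemma term_le_one (μ ν : Measure E) [IsProbabilityMeasure μ] [IsProbabilityMeasure ν]
    (A : {s : Set E // MeasurableSet s}) : |(μ A.1).toReal - (ν A.1).toReal| ≤ 1 := by
  have h1 : (μ A.1).toReal ≤ 1 := by
    simpa using ENNReal.toReal_mono (by simp) (prob_le_one (μ := μ) (s := A.1))
  have h2 : (ν A.1).toReal ≤ 1 := by
    simpa using ENNReal.toReal_mono (by simp) (prob_le_one (μ := ν) (s := A.1))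
  have h3 : (0:ℝ) ≤ (μ A.1).toReal := ENNReal.toReal_nonneg
  have h4 : (0:ℝ) ≤ (ν A.1).toReal := ENNReal.toReal_nonneg
  rw [abs_le]; constructor <;> linarith

lemma dTV_le_one (μ ν : Measure E) [IsProbabilityMeasure μ] [IsProbabilityMeasure ν] :
    dTV μ ν ≤ 1 := ciSup_le (term_le_one μ ν)

lemma dTV_bdd (μ ν : Measure E) [IsProbabilityMeasure μ] [IsProbabilityMeasure ν] :
    BddAbove (Set.range fun A : {s : Set E // MeasurableSet s} =>
      |(μ A.1).toReal - (ν A.1).toReal|) :=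
  ⟨1, by rintro x ⟨A, rfl⟩; exact term_le_one μ ν A⟩

lemma dTV_comm (μ ν : Measure E) : dTV μ ν = dTV ν μ := by
  unfold dTV; congr 1; ext A; exact abs_sub_comm _ _

lemma dTV_self (μ : Measure E) : dTV μ μ = 0 := by
  unfold dTV; simp

lemma dTV_triangle (μ ν κ : Measure E) [IsProbabilityMeasure μ] [IsProbabilityMeasure ν]
    [IsProbabilityMeasure κ] : dTV μ κ ≤ dTV μ ν + dTV ν κ := by
  refine ciSup_le fun A => ?_
  calc |(μ A.1).toReal - (κ A.1).toReal|
      ≤ |(μ A.1).toReal - (ν A.1).toReal| + |(ν A.1).toReal - (κ A.1).toReal| :=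
        abs_sub_le _ _ _
    _ ≤ dTV μ ν + dTV ν κ :=
        add_le_add (le_ciSup (dTV_bdd μ ν) A) (le_ciSup (dTV_bdd ν κ) A)

lemma isProbabilityMeasure_bind (μ : Measure E) [IsProbabilityMeasure μ]
    (κ : Kernel E E) [IsMarkovKernel κ] : IsProbabilityMeasure (μ.bind κ) := by
  constructor
  rw [Measure.bind_apply MeasurableSet.univ (Kernel.measurable κ).aemeasurable]
  simp

end lemmas

lemma conv_tendsto {ε : ℝ} (hε0 : 0 < ε) (hε1 : ε < 1) (a : ℕ → ℝ)
    (ha0 : ∀ l, 0 ≤ a l) (ha1 : ∀ l, a l ≤ 1) (h : Tendsto a atTop (nhds 0)) :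
    Tendsto (fun t => ∑ l ∈ Finset.Icc 1 t, ε ^ (t + 1 - l) * a l) atTop (nhds 0) := by
  rw [Metric.tendsto_atTop]
  intro δ hδ
  have hε0' : (0:ℝ) ≤ ε := hε0.le
  have h1ε : 0 < 1 - ε := by linarith
  set δ' := δ * (1 - ε) / 2 with hδ'def
  have hδ' : 0 < δ' := by positivity
  obtain ⟨M, hM⟩ := (Metric.tendsto_atTop.mp h) δ' hδ'
  have hpow : Tendsto (fun n => ε ^ n * (M:ℝ)) atTop (nhds 0) := by
    simpa using (tendsto_pow_atTop_nhds_zero_of_lt_one hε0' hε1).mul_const (M:ℝ)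
  obtain ⟨N, hN⟩ := (Metric.tendsto_atTop.mp hpow) (δ/2) (by positivity)
  refine ⟨M + N, fun t ht => ?_⟩
  have hMt : M ≤ t := le_trans (Nat.le_add_right _ _) ht
  have hsplit : ∑ l ∈ Finset.Icc 1 t, ε ^ (t + 1 - l) * a l
      = ∑ l ∈ Finset.Ioc 0 M, ε ^ (t + 1 - l) * a l
        + ∑ l ∈ Finset.Ioc M t, ε ^ (t + 1 - l) * a l := by
    rw [show Finset.Icc 1 t = Finset.Ioc 0 t from (Finset.Icc_add_one_left_eq_Ioc 0 t)]
    exact (Finset.sum_Ioc_consecutive _ (Nat.zero_le M) hMt).symm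
  have hb1 : ∑ l ∈ Finset.Ioc 0 M, ε ^ (t + 1 - l) * a l < δ / 2 := by
    calc ∑ l ∈ Finset.Ioc 0 M, ε ^ (t + 1 - l) * a l
        ≤ ∑ l ∈ Finset.Ioc 0 M, ε ^ (t + 1 - M) := by
          refine Finset.sum_le_sum fun l hl => ?_
          have hlM : l ≤ M := (Finset.mem_Ioc.mp hl).2
          calc ε ^ (t + 1 - l) * a l ≤ ε ^ (t + 1 - l) * 1 :=
                mul_le_mul_of_nonneg_left (ha1 l) (by positivity)
            _ = ε ^ (t + 1 - l) := mul_one _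
            _ ≤ ε ^ (t + 1 - M) :=
                pow_le_pow_of_le_one hε0' hε1.le (Nat.sub_le_sub_left hlM _)
      _ = ε ^ (t + 1 - M) * (M:ℝ) := by
          rw [Finset.sum_const, Nat.card_Ioc, Nat.sub_zero, nsmul_eq_mul, mul_comm]
      _ < δ / 2 := by
          have := hN (t + 1 - M) (by omega)
          rwa [Real.dist_eq, sub_zero, abs_of_nonneg (by positivity)] at this
  have hb2 : ∑ l ∈ Finset.Ioc M t, ε ^ (t + 1 - l) * a l ≤ δ / 2 := by
    have step : ∑ l ∈ Finset.Ioc M t, ε ^ (t + 1 - l) * a l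
        ≤ ∑ l ∈ Finset.Ioc M t, ε ^ (t - l) * δ' := by
      refine Finset.sum_le_sum fun l hl => ?_
      have hlM : M < l := (Finset.mem_Ioc.mp hl).1
      have hal : a l ≤ δ' := by
        have := hM l hlM.le
        rw [Real.dist_eq, sub_zero, abs_of_nonneg (ha0 l)] at this
        exact this.le
      have hpl : ε ^ (t + 1 - l) ≤ ε ^ (t - l) :=
        pow_le_pow_of_le_one hε0' hε1.le (by omega)
      exact mul_le_mul hpl hal (ha0 l) (by positivity)
    have step2 : ∑ l ∈ Finset.Ioc M t, ε ^ (t - l) * δ'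
        ≤ ∑ l ∈ Finset.range (t + 1), ε ^ (t - l) * δ' := by
      refine Finset.sum_le_sum_of_subset_of_nonneg ?_ fun l _ _ => by positivity
      intro l hl
      exact Finset.mem_range.mpr (Nat.lt_succ_of_le (Finset.mem_Ioc.mp hl).2)
    have step3 : ∑ l ∈ Finset.range (t + 1), ε ^ (t - l) * δ'
        = (∑ j ∈ Finset.range (t + 1), ε ^ j) * δ' := by
      rw [← Finset.sum_mul]
      congr 1
      have := Finset.sum_range_reflect (fun j => ε ^ j) (t + 1)
      simpa using this
    have step4 : (∑ j ∈ Finset.range (t + 1), ε ^ j) * δ' ≤ (1 / (1 - ε)) * δ' := by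
      refine mul_le_mul_of_nonneg_right ?_ hδ'.le
      rw [geom_sum_eq (by linarith) (t + 1),
        show (ε ^ (t + 1) - 1) / (ε - 1) = (1 - ε ^ (t + 1)) / (1 - ε) by
          rw [← neg_div_neg_eq]; ring_nf]
      have : 0 ≤ ε ^ (t + 1) := by positivity
      gcongr
      linarith
    have : (1 / (1 - ε)) * δ' = δ / 2 := by
      field_simp [hδ'def]
      rw [hδ'def]; ring
    linarith
  have hnonneg : 0 ≤ ∑ l ∈ Finset.Icc 1 t, ε ^ (t + 1 - l) * a l :=
    Finset.sum_nonneg fun l _ => mul_nonneg (by positivity) (ha0 l)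
  rw [Real.dist_eq, sub_zero, abs_of_nonneg hnonneg]
  rw [hsplit] at *
  linarith

lemma chainSeq_prob {E : Type*} [MeasurableSpace E] (π₀ : Measure E)
    [IsProbabilityMeasure π₀] (S : ℕ → Kernel E E) (hS : ∀ t, IsMarkovKernel (S t)) :
    ∀ t, IsProbabilityMeasure (chainSeq π₀ S t)
  | 0 => ‹IsProbabilityMeasure π₀›
  | t + 1 => by
    haveI := chainSeq_prob π₀ S hS t
    haveI := hS (t + 1)
    exact _root_.isProbabilityMeasure_bind _ _

/-- If each step kernel contracts towards `f t` by a factor `ε ∈ (0,1)`, then the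
distance `d_TV(h_t, f_t)` is bounded by the convolution sum
`Σ_{l=1}^{t} ε^{t+1−l} d_TV(f_l, f_{l−1})` (with `f 0 = π₀`); in particular, if
`d_TV(f_l, f_{l−1}) → 0` then `d_TV(h_t, f_t) → 0`. -/
theorem chain_contraction_bound {E : Type*} [MeasurableSpace E]
    (S : ℕ → Kernel E E) (hS : ∀ t, IsMarkovKernel (S t))
    (f : ℕ → Measure E) (hf : ∀ t, IsProbabilityMeasure (f t))
    (ε : ℝ) (hε : ε ∈ Set.Ioo (0:ℝ) 1)
    (hcontr : ∀ t ≥ 1, ∀ μ : Measure E, IsProbabilityMeasure μ →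
      dTV (μ.bind (S t)) (f t) ≤ ε * dTV μ (f t)) :
    (∀ t : ℕ, dTV (chainSeq (f 0) S t) (f t) ≤
        ∑ l ∈ Finset.Icc 1 t, ε ^ (t + 1 - l) * dTV (f l) (f (l - 1)))
    ∧ (Tendsto (fun l => dTV (f l) (f (l - 1))) atTop (nhds 0) →
        Tendsto (fun t => dTV (chainSeq (f 0) S t) (f t)) atTop (nhds 0)) := by
  obtain ⟨hε0, hε1⟩ := hε
  haveI := hf 0
  haveI := fun t => hf t
  haveI hc := chainSeq_prob (f 0) S hS
  set a : ℕ → ℝ := fun l => dTV (f l) (f (l - 1)) with ha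
  have part1 : ∀ t : ℕ, dTV (chainSeq (f 0) S t) (f t) ≤
      ∑ l ∈ Finset.Icc 1 t, ε ^ (t + 1 - l) * a l := by
    intro t
    induction t with
    | zero => simp [chainSeq, dTV_self]
    | succ t ih =>
      haveI := hc t
      have h1 : dTV (chainSeq (f 0) S (t + 1)) (f (t + 1))
          ≤ ε * dTV (chainSeq (f 0) S t) (f (t + 1)) := by
        exact hcontr (t + 1) (by omega) _ (hc t)
      have h2 : dTV (chainSeq (f 0) S t) (f (t + 1))
          ≤ dTV (chainSeq (f 0) S t) (f t) + a (t + 1) := by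
        have := dTV_triangle (chainSeq (f 0) S t) (f t) (f (t + 1))
        have hcomm : dTV (f t) (f (t + 1)) = a (t + 1) := by
          rw [ha]; simp [dTV_comm]
        linarith
      have hsum : ∑ l ∈ Finset.Icc 1 (t + 1), ε ^ (t + 1 + 1 - l) * a l
          = ε * ((∑ l ∈ Finset.Icc 1 t, ε ^ (t + 1 - l) * a l) + a (t + 1)) := by
        rw [Finset.sum_Icc_succ_top (by omega), mul_add, Finset.mul_sum]
        congr 1
        · refine Finset.sum_congr rfl fun l hl => ?_
          have hl' := Finset.mem_Icc.mp hl
          rw [show t + 1 + 1 - l = (t + 1 - l) + 1 by omega, pow_succ]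
          ring
        · rw [show t + 1 + 1 - (t + 1) = 1 by omega, pow_one]
      rw [hsum]
      calc dTV (chainSeq (f 0) S (t + 1)) (f (t + 1))
          ≤ ε * dTV (chainSeq (f 0) S t) (f (t + 1)) := h1
        _ ≤ ε * (dTV (chainSeq (f 0) S t) (f t) + a (t + 1)) :=
            mul_le_mul_of_nonneg_left h2 hε0.le
        _ ≤ ε * ((∑ l ∈ Finset.Icc 1 t, ε ^ (t + 1 - l) * a l) + a (t + 1)) := by
            nlinarith [dTV_nonneg (chainSeq (f 0) S t) (f t)]
  refine ⟨part1, fun htend => ?_⟩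
  have ha0 : ∀ l, 0 ≤ a l := fun l => dTV_nonneg _ _
  have ha1 : ∀ l, a l ≤ 1 := fun l => dTV_le_one _ _
  have hconv := conv_tendsto hε0 hε1 a ha0 ha1 htend
  refine squeeze_zero (fun t => dTV_nonneg _ _) part1 hconv
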